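/- Let U = D₁ ⊗ I + D₂ ⊗ (I_n ⊕ V₁) + D₃ ⊗ (V₃ ⊕ I_q) be a controlled permutation unitary where D₁, D₂, D₃ are rank-one orthogonal projectors onto computational basis states of ℂ³, V₁ is a q×q permutation matrix with no fixed points, and V₃ is an n×n permutation matrix with no fixed points (here I = I_{n+q}, and V₃ acts on the first n coordinates, V₁ on the last q). Then there is no vector |c⟩ ∈ ℂ^{n+q} such that the three vectors |c⟩, (I_n ⊕ V₁)|c⟩, and (V₃ ⊕ I_q)|c⟩ are nonzero and pairwise orthogonal. -/

import Mathlib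

theorem stmt18 {n q : ℕ} (σ1 : Equiv.Perm (Fin q)) (σ3 : Equiv.Perm (Fin n))
    (h1 : ∀ j, σ1 j ≠ j) (h3 : ∀ j, σ3 j ≠ j)
    (A B : Matrix (Fin n ⊕ Fin q) (Fin n ⊕ Fin q) ℂ)
    (hA : A = Matrix.fromBlocks 1 0 0 (fun i j => if i = σ1 j then 1 else 0))
    (hB : B = Matrix.fromBlocks (fun i j => if i = σ3 j then 1 else 0) 0 0 1) :
    ¬∃ c : Fin n ⊕ Fin q → ℂ,
      c ≠ 0 ∧ A.mulVec c ≠ 0 ∧ B.mulVec c ≠ 0 ∧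
      (∑ i, (starRingEnd ℂ) (c i) * A.mulVec c i) = 0 ∧
      (∑ i, (starRingEnd ℂ) (c i) * B.mulVec c i) = 0 ∧
      (∑ i, (starRingEnd ℂ) (A.mulVec c i) * B.mulVec c i) = 0 := by
  rintro ⟨c, hc0, -, -, e1, e2, e3⟩
  have hAl : ∀ k, A.mulVec c (Sum.inl k) = c (Sum.inl k) := by
    intro k
    subst hA
    simp [Matrix.mulVec, dotProduct, Fintype.sum_sum_type, Matrix.one_apply, Matrix.fromBlocks, Matrix.of_apply]
  have hAr : ∀ k, A.mulVec c (Sum.inr k) = c (Sum.inr (σ1.symm k)) := by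
    intro k
    subst hA
    simp only [Matrix.mulVec, dotProduct, Fintype.sum_sum_type, Matrix.fromBlocks, Matrix.of_apply, Sum.elim_inl, Sum.elim_inr, Pi.zero_apply,
      Matrix.fromBlocks_apply₂₁, Matrix.fromBlocks_apply₂₂, Matrix.zero_apply, zero_mul,
      Finset.sum_const_zero, zero_add, ite_mul, one_mul]
    rw [Finset.sum_congr rfl (fun j _ =>
      if_congr (σ1.symm_apply_eq).symm rfl rfl), Finset.sum_ite_eq]
    simp
  have hBl : ∀ k, B.mulVec c (Sum.inl k) = c (Sum.inl (σ3.symm k)) := by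
    intro k
    subst hB
    simp only [Matrix.mulVec, dotProduct, Fintype.sum_sum_type, Matrix.fromBlocks, Matrix.of_apply, Sum.elim_inl, Sum.elim_inr, Pi.zero_apply,
      Matrix.fromBlocks_apply₁₁, Matrix.fromBlocks_apply₁₂, Matrix.zero_apply, zero_mul,
      Finset.sum_const_zero, add_zero, ite_mul, one_mul]
    rw [Finset.sum_congr rfl (fun j _ =>
      if_congr (σ3.symm_apply_eq).symm rfl rfl), Finset.sum_ite_eq]
    simp
  have hBr : ∀ k, B.mulVec c (Sum.inr k) = c (Sum.inr k) := by
    intro k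
    subst hB
    simp [Matrix.mulVec, dotProduct, Fintype.sum_sum_type, Matrix.one_apply, Matrix.fromBlocks, Matrix.of_apply]
  rw [Fintype.sum_sum_type] at e1 e2 e3
  simp only [hAl, hAr, hBl, hBr] at e1 e2 e3
  -- e1 : ∑ conj(b k) * b k + ∑ conj(c' k) * c'(σ1⁻¹ k) = 0
  -- e2 : ∑ conj(b k) * b(σ3⁻¹ k) + ∑ conj(c' k) * c' k = 0
  -- e3 : ∑ conj(b k) * b(σ3⁻¹ k) + ∑ conj(c'(σ1⁻¹ k)) * c' k = 0
  have e1' : (∑ k, (starRingEnd ℂ) (c (Sum.inl k)) * c (Sum.inl k)) +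
      ∑ k, (starRingEnd ℂ) (c (Sum.inr (σ1.symm k))) * c (Sum.inr k) = 0 := by
    have h := congrArg (starRingEnd ℂ) e1
    rw [map_add, map_sum, map_sum, map_zero] at h
    simp only [map_mul, Complex.conj_conj] at h
    rw [Finset.sum_congr rfl (fun k _ => mul_comm (c (Sum.inl k)) _),
      Finset.sum_congr rfl (fun k _ => mul_comm (c (Sum.inr k)) _)] at h
    exact h
  have key : (∑ i, (starRingEnd ℂ) (c i) * c i) = 0 := by
    rw [Fintype.sum_sum_type]
    linear_combination e1' + e2 - e3
  have hns : (∑ i, Complex.normSq (c i)) = 0 := by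
    have : ((∑ i, Complex.normSq (c i) : ℝ) : ℂ) = 0 := by
      push_cast
      rw [← key]
      exact Finset.sum_congr rfl fun i _ => by
        rw [Complex.normSq_eq_conj_mul_self]
    exact_mod_cast this
  apply hc0
  funext i
  have := (Finset.sum_eq_zero_iff_of_nonneg (fun i _ => Complex.normSq_nonneg (c i))).mp hns
    i (Finset.mem_univ i)
  simpa using Complex.normSq_eq_zero.mp this
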